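/- Any sublist of a valid order of removal steps is itself a valid order of removal steps: if ℓ ∈ RO(I) and ℓ' is a sublist of ℓ (preserving order), then ℓ' ∈ RO(I). -/

import Mathlib

/-- Redundancy of input `i` in input set `I`:
`min { |Seq(bl) ∩ I| : bl ∈ Cov i } − 1`, where `Seq(bl) = {x : bl ∈ Cov x}`. -/
noncomputable def red {Inp Obj : Type*} [DecidableEq Obj]
    (Cov : Inp → Finset Obj) (i : Inp) (I : Finset Inp) : ℤ :=
  ((sInf {n : ℕ | ∃ bl ∈ Cov i, (I.filter fun x => bl ∈ Cov x).card = n} : ℕ) : ℤ) - 1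

/-- A list is a valid order of removal steps for `I`. -/
noncomputable def RO {Inp Obj : Type*} [DecidableEq Inp] [DecidableEq Obj]
    (Cov : Inp → Finset Obj) : Finset Inp → List Inp → Prop
  | _, [] => True
  | I, i :: l => i ∈ I ∧ 0 < red Cov i I ∧ RO Cov (I.erase i) l

private lemma red_mono' {Inp Obj : Type*} [DecidableEq Obj]
    (Cov : Inp → Finset Obj) (hCov : ∀ i : Inp, (Cov i).Nonempty)
    (j : Inp) {S I : Finset Inp} (hSI : S ⊆ I) :
    red Cov j S ≤ red Cov j I := by
  unfold red
  have hne : {n : ℕ | ∃ bl ∈ Cov j, (I.filter fun x => bl ∈ Cov x).card = n}.Nonempty := by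
    obtain ⟨bl, hbl⟩ := hCov j
    exact ⟨(I.filter fun x => bl ∈ Cov x).card, bl, hbl, rfl⟩
  obtain ⟨bl, hbl, hcard⟩ := Nat.sInf_mem hne
  have h1 : sInf {n : ℕ | ∃ bl ∈ Cov j, (S.filter fun x => bl ∈ Cov x).card = n}
      ≤ (S.filter fun x => bl ∈ Cov x).card := Nat.sInf_le ⟨bl, hbl, rfl⟩
  have h2 : (S.filter fun x => bl ∈ Cov x).card ≤ (I.filter fun x => bl ∈ Cov x).card :=
    Finset.card_le_card (Finset.filter_subset_filter _ hSI)
  have := le_trans h1 h2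
  omega

private lemma RO_mono {Inp Obj : Type*} [DecidableEq Inp] [DecidableEq Obj]
    (Cov : Inp → Finset Obj) (hCov : ∀ i : Inp, (Cov i).Nonempty) :
    ∀ (l : List Inp) (S I : Finset Inp), S ⊆ I → RO Cov S l → RO Cov I l
  | [], _, _, _, _ => trivial
  | j :: l, S, I, hSI, ⟨hj, hred, hrest⟩ =>
    ⟨hSI hj, lt_of_lt_of_le hred (red_mono' Cov hCov j hSI),
      RO_mono Cov hCov l _ _ (Finset.erase_subset_erase j hSI) hrest⟩

/-- Any sublist of a valid order of removal steps is a valid order of removal steps. -/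
theorem sublist_RO {Inp Obj : Type*} [DecidableEq Inp] [DecidableEq Obj]
    (Cov : Inp → Finset Obj) (hCov : ∀ i : Inp, (Cov i).Nonempty)
    (I : Finset Inp) (l l' : List Inp) (hl : RO Cov I l) (hsub : l'.Sublist l) :
    RO Cov I l' := by
  induction hsub generalizing I with
  | slnil => trivial
  | cons i h ih =>
    obtain ⟨_, _, hrest⟩ := hl
    exact RO_mono Cov hCov _ _ _ (Finset.erase_subset i I) (ih _ hrest)
  | cons_cons i h ih =>
    obtain ⟨hi, hred, hrest⟩ := hl
    exact ⟨hi, hred, ih _ hrest⟩
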